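/- arXiv:1310.8542 — 2 statements merged into one kernel-verified Lean document; each statement's English description precedes it below -/
import Mathlib

section
/- Let U and Q be subspaces of ℝⁿ with dim(U) = dim(Q). Then there exists a symmetric linear map B: ℝⁿ → ℝⁿ such that the orthogonal projection onto Q of B(U) equals Q (equivalently, π_Q(B(U)) = Q). -/
open Module RealInnerProductSpace

theorem stmt5 (n : ℕ) (U Q : Submodule ℝ (EuclideanSpace ℝ (Fin n)))
    (h : Module.finrank ℝ U = Module.finrank ℝ Q) :
    ∃ B : EuclideanSpace ℝ (Fin n) →ₗ[ℝ] EuclideanSpace ℝ (Fin n), B.IsSymmetric ∧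
      Submodule.map ((Q.subtypeL.comp Q.orthogonalProjectionOnto).toLinearMap) (U.map B) = Q := by
  set K₁ : Submodule ℝ (EuclideanSpace ℝ (Fin n)) := U ⊓ Qᗮ with hK₁
  set K₂ : Submodule ℝ (EuclideanSpace ℝ (Fin n)) := Q ⊓ Uᗮ with hK₂
  -- dimension count
  have hdim : finrank ℝ K₁ = finrank ℝ K₂ := by
    have e1 : finrank ℝ ↥(U ⊔ Qᗮ) + finrank ℝ ↥K₁ = finrank ℝ ↥U + finrank ℝ ↥Qᗮ :=
      Submodule.finrank_sup_add_finrank_inf_eq U Qᗮ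
    have e3 := Q.finrank_add_finrank_orthogonal
    have e5 : finrank ℝ ↥(U ⊔ Qᗮ) + finrank ℝ ↥K₂ = finrank ℝ (EuclideanSpace ℝ (Fin n)) := by
      have horth : (U ⊔ Qᗮ)ᗮ = K₂ := by
        rw [← Submodule.inf_orthogonal, Submodule.orthogonal_orthogonal, hK₂, inf_comm]
      have := (U ⊔ Qᗮ).finrank_add_finrank_orthogonal
      rwa [horth] at this
    omega
  let e : K₁ ≃ₗ[ℝ] K₂ := LinearEquiv.ofFinrankEq _ _ hdim
  let P : (EuclideanSpace ℝ (Fin n)) →ₗ[ℝ] (EuclideanSpace ℝ (Fin n)) := (Q.subtypeL.comp (Submodule.orthogonalProjectionOnto Q)).toLinearMap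
  let D : (EuclideanSpace ℝ (Fin n)) →ₗ[ℝ] (EuclideanSpace ℝ (Fin n)) := K₂.subtype ∘ₗ e.toLinearMap ∘ₗ (Submodule.orthogonalProjectionOnto K₁ : EuclideanSpace ℝ (Fin n) →L[ℝ] K₁)
  let D' : (EuclideanSpace ℝ (Fin n)) →ₗ[ℝ] (EuclideanSpace ℝ (Fin n)) :=
    K₁.subtype ∘ₗ (LinearMap.adjoint e.toLinearMap) ∘ₗ (Submodule.orthogonalProjectionOnto K₂ : EuclideanSpace ℝ (Fin n) →L[ℝ] K₂)
  have hD : ∀ x, D x = ((e (Submodule.orthogonalProjectionOnto K₁ x) : K₂) : EuclideanSpace ℝ (Fin n)) := fun x => rfl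
  have hD' : ∀ x, D' x = ((LinearMap.adjoint e.toLinearMap (Submodule.orthogonalProjectionOnto K₂ x) : K₁) : EuclideanSpace ℝ (Fin n)) :=
    fun x => rfl
  have hDadj : ∀ x y : EuclideanSpace ℝ (Fin n), ⟪D x, y⟫ = ⟪x, D' y⟫ := by
    intro x y
    rw [hD, hD']
    have t1 : ⟪((e (Submodule.orthogonalProjectionOnto K₁ x) : K₂) : EuclideanSpace ℝ (Fin n)), y⟫
        = ⟪e (Submodule.orthogonalProjectionOnto K₁ x), Submodule.orthogonalProjectionOnto K₂ y⟫ :=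
      (Submodule.inner_orthogonalProjectionOnto_eq_of_mem_left (K := K₂) (e (Submodule.orthogonalProjectionOnto K₁ x)) y).symm
    have t2 : ⟪e (Submodule.orthogonalProjectionOnto K₁ x), Submodule.orthogonalProjectionOnto K₂ y⟫
        = ⟪(Submodule.orthogonalProjectionOnto K₁ x : K₁),
            LinearMap.adjoint e.toLinearMap (Submodule.orthogonalProjectionOnto K₂ y)⟫ := by
      rw [LinearMap.adjoint_inner_right]
      rfl
    have t3 : ⟪(Submodule.orthogonalProjectionOnto K₁ x : K₁),
            LinearMap.adjoint e.toLinearMap (Submodule.orthogonalProjectionOnto K₂ y)⟫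
        = ⟪x, ((LinearMap.adjoint e.toLinearMap (Submodule.orthogonalProjectionOnto K₂ y) : K₁) :
            EuclideanSpace ℝ (Fin n))⟫ :=
      Submodule.inner_orthogonalProjectionOnto_eq_of_mem_right (K := K₁)
        (LinearMap.adjoint e.toLinearMap ((Submodule.orthogonalProjectionOnto K₂) y)) x
    exact (t1.trans t2).trans t3
  refine ⟨P + D + D', ?_, ?_⟩
  · intro x y
    have hP : ⟪P x, y⟫ = ⟪x, P y⟫ := Q.starProjection_isSymmetric x y
    have h1 := hDadj x y
    have h2 : ⟪D' x, y⟫ = ⟪x, D y⟫ := by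
      linarith [hDadj y x, real_inner_comm (D' x) y, real_inner_comm y (D' x),
        real_inner_comm (D y) x, real_inner_comm x (D y)]
    simp only [LinearMap.add_apply, inner_add_left, inner_add_right, hP, h1, h2]
    ring
  · -- properties of P
    have hPmem : ∀ x : EuclideanSpace ℝ (Fin n), P x ∈ Q := fun x => (Submodule.orthogonalProjectionOnto Q x).2
    have hPid : ∀ x ∈ Q, P x = x := by
      intro x hx
      show ((Submodule.orthogonalProjectionOnto Q x : Q) : EuclideanSpace ℝ (Fin n)) = x
      exact Submodule.starProjection_eq_self_iff.2 hx
    have hPzero : ∀ x ∈ Qᗮ, P x = 0 := by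
      intro x hx
      show ((Submodule.orthogonalProjectionOnto Q x : Q) : EuclideanSpace ℝ (Fin n)) = 0
      rw [Submodule.orthogonalProjectionOnto_eq_zero_iff.2 hx]; rfl
    have hK₁Q : K₁ ≤ Qᗮ := inf_le_right
    have hK₂Q : K₂ ≤ Q := inf_le_left
    set B : (EuclideanSpace ℝ (Fin n)) →ₗ[ℝ] (EuclideanSpace ℝ (Fin n)) := P + D + D' with hB
    -- On U, P ∘ B = P + D
    have hPB : ∀ u : EuclideanSpace ℝ (Fin n), u ∈ U → P (B u) = P u + D u := by
      intro u hu
      have h1 : P (P u) = P u := hPid _ (hPmem u)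
      have h2 : P (D u) = D u := hPid _ (hK₂Q (by rw [hD]; exact (e (Submodule.orthogonalProjectionOnto K₁ u)).2))
      have h3 : P (D' u) = 0 := hPzero _ (hK₁Q (by rw [hD']; exact Subtype.coe_prop _))
      simp only [hB, LinearMap.add_apply, map_add, h1, h2, h3, add_zero]
    -- injectivity of (P ∘ B) on U
    have hinj : ∀ u : EuclideanSpace ℝ (Fin n), u ∈ U → P (B u) = 0 → u = 0 := by
      intro u hu h0
      rw [hPB u hu] at h0
      have hDU : D u ∈ Uᗮ := (inf_le_right : K₂ ≤ Uᗮ) (by rw [hD]; exact Subtype.coe_prop _)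
      have hinner : ⟪P u + D u, D u⟫ = 0 := by rw [h0]; exact inner_zero_left _
      have hPuDu : ⟪P u, D u⟫ = ⟪u, D u⟫ := by
        have : D u ∈ Q := hK₂Q (by rw [hD]; exact Subtype.coe_prop _)
        calc ⟪P u, D u⟫ = ⟪u, P (D u)⟫ := Q.starProjection_isSymmetric u (D u)
          _ = ⟪u, D u⟫ := by rw [hPid _ this]
      have huDu : ⟪u, D u⟫ = 0 := (Submodule.mem_orthogonal _ _).1 hDU u hu
      have hDu0 : D u = 0 := by
        have : ⟪D u, D u⟫ = 0 := by
          have := hinner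
          rw [inner_add_left, hPuDu, huDu, zero_add] at this
          exact this
        exact inner_self_eq_zero.1 this
      have hPu0 : P u = 0 := by rw [← h0, hDu0, add_zero]
      have huQ : u ∈ Qᗮ := by
        have : (Submodule.orthogonalProjectionOnto Q u : Q) = 0 := by
          apply Subtype.coe_injective
          exact hPu0
        exact Submodule.orthogonalProjectionOnto_eq_zero_iff.1 this
      have huK₁ : u ∈ K₁ := ⟨hu, huQ⟩
      have hπ : (Submodule.orthogonalProjectionOnto K₁) u = ⟨u, huK₁⟩ :=
        Subtype.ext (Submodule.starProjection_eq_self_iff.2 huK₁)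
      have he0 : e ((Submodule.orthogonalProjectionOnto K₁) u) = 0 := by
        apply Subtype.coe_injective
        show ((e ((Submodule.orthogonalProjectionOnto K₁) u) : K₂) : EuclideanSpace ℝ (Fin n)) = ((0 : K₂) : EuclideanSpace ℝ (Fin n))
        rw [ZeroMemClass.coe_zero, ← hD u]
        exact hDu0
      have hu0 : (Submodule.orthogonalProjectionOnto K₁) u = 0 := e.injective (he0.trans (map_zero e).symm)
      rw [hπ] at hu0
      simpa using congrArg Subtype.val hu0
    -- the composed map on U
    refine le_antisymm ?_ ?_
    · rintro x ⟨y, _, rfl⟩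
      exact hPmem y
    · -- dimension argument
      rw [← Submodule.map_comp]
      set f : U →ₗ[ℝ] EuclideanSpace ℝ (Fin n) := (P ∘ₗ B) ∘ₗ U.subtype with hf
      have hrange : LinearMap.range f = Submodule.map (P ∘ₗ B) U := by
        rw [hf, LinearMap.range_comp, Submodule.range_subtype]
      have hfinj : Function.Injective f := by
        rw [← LinearMap.ker_eq_bot]
        rw [Submodule.eq_bot_iff]
        rintro ⟨u, hu⟩ hku
        have : P (B u) = 0 := hku
        have := hinj u hu this
        exact Subtype.ext this
      have hfr : finrank ℝ (LinearMap.range f) = finrank ℝ U := LinearMap.finrank_range_of_inj hfinj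
      have hle : Submodule.map (P ∘ₗ B) U ≤ Q := by
        rintro x ⟨y, _, rfl⟩
        exact hPmem _
      have := Submodule.eq_of_le_of_finrank_eq hle (by rw [← hrange, hfr, h])
      rw [this]
end

section
/- For every α > 0 and every matrix M ∈ GL⁺(2,ℝ) having two distinct real eigendirections E₁, E₂ whose angle is less than α, there exists s ∈ [-1,1] such that R^(sα) ∘ M has a non-real (complex) eigenvalue, where R^θ denotes rotation by angle θ. -/
open Matrix

lemma spec_of_disc_neg (A : Matrix (Fin 2) (Fin 2) ℝ)
    (h : (A 0 0 + A 1 1)^2 < 4 * A.det) :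
    ∃ z : ℂ, z.im ≠ 0 ∧ z ∈ spectrum ℂ (A.map (algebraMap ℝ ℂ)) := by
  set t : ℝ := A 0 0 + A 1 1 with ht
  set d : ℝ := A.det with hd
  have hpos : 0 < 4 * d - t ^ 2 := by linarith
  set y : ℝ := Real.sqrt (4 * d - t ^ 2) / 2 with hy
  have hy0 : 0 < y := by positivity
  refine ⟨⟨t / 2, y⟩, by simpa using hy0.ne', ?_⟩
  rw [spectrum.mem_iff]
  intro hunit
  have hdet := (Matrix.isUnit_iff_isUnit_det _).mp hunit
  have : ((algebraMap ℂ (Matrix (Fin 2) (Fin 2) ℂ)) ⟨t/2, y⟩ - A.map (algebraMap ℝ ℂ)).det = 0 := by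
    have hdetf : A.det = A 0 0 * A 1 1 - A 0 1 * A 1 0 := Matrix.det_fin_two A
    have hysq : y ^ 2 = (4 * d - t ^ 2)/4 := by
      rw [hy, div_pow, Real.sq_sqrt hpos.le]; norm_num
    rw [Matrix.det_fin_two]
    simp [Matrix.algebraMap_matrix_apply, Matrix.map_apply, Complex.ext_iff,
      Complex.mul_re, Complex.mul_im]
    constructor <;> nlinarith [hysq, hdetf]
  rw [this] at hdet
  exact not_isUnit_zero hdet

lemma key (α β : ℝ) (hβ0 : 0 ≤ β) (hβα : β < α) (M : Matrix (Fin 2) (Fin 2) ℝ)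
    (ε : ℝ) (hε : ε = 1 ∨ ε = -1)
    (h : (Real.cos β * (M 0 0 + M 1 1) + ε * Real.sin β * (M 0 1 - M 1 0))^2
          < 4 * M.det) :
    ∃ s : ℝ, s ∈ Set.Icc (-1 : ℝ) 1 ∧ ∃ z : ℂ, z.im ≠ 0 ∧
      z ∈ spectrum ℂ
        ((!![Real.cos (s * α), -Real.sin (s * α); Real.sin (s * α), Real.cos (s * α)] * M).map
          (algebraMap ℝ ℂ)) := by
  have hα : 0 < α := lt_of_le_of_lt hβ0 hβα
  refine ⟨ε * β / α, ?_, ?_⟩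
  · have h1 : β / α ≤ 1 := by rw [div_le_one hα]; linarith
    have h2 : 0 ≤ β / α := by positivity
    rcases hε with rfl | rfl <;> constructor <;> simp only [one_mul, neg_mul] <;> linarith [neg_div α β]
  · have hsα : ε * β / α * α = ε * β := by field_simp
    have hcos : Real.cos (ε * β) = Real.cos β := by
      rcases hε with rfl | rfl <;> simp [Real.cos_neg]
    have hsin : Real.sin (ε * β) = ε * Real.sin β := by
      rcases hε with rfl | rfl <;> simp
    set A := !![Real.cos (ε * β / α * α), -Real.sin (ε * β / α * α);
        Real.sin (ε * β / α * α), Real.cos (ε * β / α * α)] * M with hA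
    have hdetA : A.det = M.det := by
      rw [hA, Matrix.det_mul, Matrix.det_fin_two_of]
      have := Real.sin_sq_add_cos_sq (ε * β / α * α)
      nlinarith
    have h00 : A 0 0 = Real.cos (ε*β) * M 0 0 - Real.sin (ε*β) * M 1 0 := by
      rw [hA, hsα]
      simp [Matrix.mul_apply, Fin.sum_univ_two]
      ring
    have h11 : A 1 1 = Real.sin (ε*β) * M 0 1 + Real.cos (ε*β) * M 1 1 := by
      rw [hA, hsα]
      simp [Matrix.mul_apply, Fin.sum_univ_two]
    have := spec_of_disc_neg A (by
      rw [h00, h11, hdetA, hcos, hsin]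
      calc (Real.cos β * M 0 0 - ε * Real.sin β * M 1 0 +
            (ε * Real.sin β * M 0 1 + Real.cos β * M 1 1))^2
          = (Real.cos β * (M 0 0 + M 1 1) + ε * Real.sin β * (M 0 1 - M 1 0))^2 := by ring
        _ < 4 * M.det := h)
    exact this

/-- Angle between two nonzero vectors of `ℝ²` (standard inner product). -/
noncomputable def vecAngle (u w : Fin 2 → ℝ) : ℝ :=
  Real.arccos ((u ⬝ᵥ w) / (Real.sqrt (u ⬝ᵥ u) * Real.sqrt (w ⬝ᵥ w)))

set_option maxHeartbeats 2000000 in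
theorem stmt8 (α : ℝ) (hα : 0 < α) (M : Matrix (Fin 2) (Fin 2) ℝ) (hdet : 0 < M.det)
    (u w : Fin 2 → ℝ) (hu : u ≠ 0) (hw : w ≠ 0)
    (l1 l2 : ℝ) (hMu : M.mulVec u = l1 • u) (hMw : M.mulVec w = l2 • w)
    (hind : ¬ ∃ c : ℝ, w = c • u)
    (hangle : vecAngle u w < α) :
    ∃ s : ℝ, s ∈ Set.Icc (-1 : ℝ) 1 ∧ ∃ z : ℂ, z.im ≠ 0 ∧
      z ∈ spectrum ℂ
        ((!![Real.cos (s * α), -Real.sin (s * α); Real.sin (s * α), Real.cos (s * α)] * M).map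
          (algebraMap ℝ ℂ)) := by
  -- scalar eigen-equations
  have e1 : M 0 0 * u 0 + M 0 1 * u 1 = l1 * u 0 := by
    have := congrFun hMu 0
    simpa [Matrix.mulVec, dotProduct, Fin.sum_univ_two] using this
  have e2 : M 1 0 * u 0 + M 1 1 * u 1 = l1 * u 1 := by
    have := congrFun hMu 1
    simpa [Matrix.mulVec, dotProduct, Fin.sum_univ_two] using this
  have e3 : M 0 0 * w 0 + M 0 1 * w 1 = l2 * w 0 := by
    have := congrFun hMw 0
    simpa [Matrix.mulVec, dotProduct, Fin.sum_univ_two] using this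
  have e4 : M 1 0 * w 0 + M 1 1 * w 1 = l2 * w 1 := by
    have := congrFun hMw 1
    simpa [Matrix.mulVec, dotProduct, Fin.sum_univ_two] using this
  set P : ℝ := u 0 * w 1 - u 1 * w 0 with hPdef
  have hP : P ≠ 0 := by
    intro h0
    apply hind
    have hu01 : u 0 ≠ 0 ∨ u 1 ≠ 0 := by
      by_contra hcon
      push_neg at hcon
      exact hu (funext fun i => by fin_cases i <;> simp [hcon.1, hcon.2])
    rcases hu01 with h | h
    · exact ⟨w 0 / u 0, by
        funext i
        fin_cases i <;> simp [Pi.smul_apply] <;> field_simp <;> nlinarith [h0]⟩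
    · exact ⟨w 1 / u 1, by
        funext i
        fin_cases i <;> simp [Pi.smul_apply] <;> field_simp <;> nlinarith [h0]⟩
  -- entrywise formulas
  have ha : M 0 0 * P = l1 * (u 0 * w 1) - l2 * (w 0 * u 1) := by
    rw [hPdef]; linear_combination w 1 * e1 - u 1 * e3
  have hb : M 0 1 * P = (l2 - l1) * (u 0 * w 0) := by
    rw [hPdef]; linear_combination (-(w 0)) * e1 + u 0 * e3
  have hc' : M 1 0 * P = (l1 - l2) * (u 1 * w 1) := by
    rw [hPdef]; linear_combination w 1 * e2 - u 1 * e4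
  have hd' : M 1 1 * P = l2 * (u 0 * w 1) - l1 * (u 1 * w 0) := by
    rw [hPdef]; linear_combination (-(w 0)) * e2 + u 0 * e4
  have htr : M 0 0 + M 1 1 = l1 + l2 := by
    have h := mul_right_cancel₀ hP (show (M 0 0 + M 1 1) * P = (l1 + l2) * P by
      rw [hPdef]; linear_combination ha + hd')
    linarith [h]
  have hdetM : M.det = l1 * l2 := by
    apply mul_right_cancel₀ (mul_ne_zero hP hP)
    rw [Matrix.det_fin_two]
    linear_combination (M 1 1 * P) * ha + (l1 * (u 0 * w 1) - l2 * (w 0 * u 1)) * hd'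
      - (M 1 0 * P) * hb - ((l2 - l1) * (u 0 * w 0)) * hc'
  -- norms and angle
  have hu01 : u 0 ≠ 0 ∨ u 1 ≠ 0 := by
    by_contra hcon
    push_neg at hcon
    exact hu (funext fun i => by fin_cases i <;> simp [hcon.1, hcon.2])
  set c : ℝ := u 0 * w 0 + u 1 * w 1 with hcdef
  have hdotuw : u ⬝ᵥ w = c := by simp [dotProduct, Fin.sum_univ_two, hcdef]
  have hdotuu : u ⬝ᵥ u = u 0 * u 0 + u 1 * u 1 := by
    simp [dotProduct, Fin.sum_univ_two]
  have hdotww : w ⬝ᵥ w = w 0 * w 0 + w 1 * w 1 := by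
    simp [dotProduct, Fin.sum_univ_two]
  have hw01 : w 0 ≠ 0 ∨ w 1 ≠ 0 := by
    by_contra hcon
    push_neg at hcon
    exact hw (funext fun i => by fin_cases i <;> simp [hcon.1, hcon.2])
  have huu : 0 < u ⬝ᵥ u := by
    rw [hdotuu]
    rcases hu01 with h | h
    · nlinarith [mul_self_pos.mpr h, mul_self_nonneg (u 1)]
    · nlinarith [mul_self_pos.mpr h, mul_self_nonneg (u 0)]
  have hww : 0 < w ⬝ᵥ w := by
    rw [hdotww]
    rcases hw01 with h | h
    · nlinarith [mul_self_pos.mpr h, mul_self_nonneg (w 1)]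
    · nlinarith [mul_self_pos.mpr h, mul_self_nonneg (w 0)]
  set N : ℝ := Real.sqrt (u ⬝ᵥ u) * Real.sqrt (w ⬝ᵥ w) with hNdef
  have hN : 0 < N := mul_pos (Real.sqrt_pos.mpr huu) (Real.sqrt_pos.mpr hww)
  have hN2 : N ^ 2 = c ^ 2 + P ^ 2 := by
    rw [hNdef, mul_pow, Real.sq_sqrt huu.le, Real.sq_sqrt hww.le, hdotuu, hdotww, hcdef, hPdef]
    ring
  have hP2 : 0 < P ^ 2 := by positivity
  have hx2 : (c / N) ^ 2 < 1 := by
    rw [div_pow, div_lt_one (by positivity)]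
    nlinarith
  have hx1 : -1 ≤ c / N ∧ c / N ≤ 1 := by
    constructor <;> nlinarith [hx2, sq_nonneg (c / N + 1), sq_nonneg (c / N - 1)]
  clear_value c N
  set β : ℝ := vecAngle u w with hβdef
  have hβeq : β = Real.arccos (c / N) := by
    rw [hβdef, vecAngle, hdotuw, ← hNdef]
  have hβ0 : 0 ≤ β := by rw [hβeq]; exact Real.arccos_nonneg _
  have hcosβ : Real.cos β = c / N := by rw [hβeq]; exact Real.cos_arccos hx1.1 hx1.2
  have hsinβ : Real.sin β = |P| / N := by
    rw [hβeq, Real.sin_arccos]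
    rw [show (1 : ℝ) - (c / N) ^ 2 = (P / N) ^ 2 by field_simp; nlinarith [hN2]]
    rw [Real.sqrt_sq_eq_abs, abs_div, abs_of_pos hN]
  have hB' : M 0 1 - M 1 0 = (l2 - l1) * c / P := by
    rw [eq_div_iff hP, hcdef]
    linear_combination hb - hc'
  have hll : 0 < l1 * l2 := hdetM ▸ hdet
  have hangle' : β < α := hβdef ▸ hangle
  clear_value P β
  clear e1 e2 e3 e4 ha hb hc' hd' hMu hMw hind hangle hβdef hPdef hNdef hcdef hdotuw hdotuu hdotww
  -- choose the sign
  rcases le_or_gt (l1 ^ 2) (l1 * l2) with hcase | hcase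
  · rcases lt_or_gt_of_ne hP with hPs | hPs
    · refine key α β hβ0 hangle' M 1 (Or.inl rfl) ?_
      rw [htr, hB', hcosβ, hsinβ, hdetM, abs_of_neg hPs]
      rw [show c / N * (l1 + l2) + 1 * (-P / N) * ((l2 - l1) * c / P) = 2 * l1 * (c / N) by
        field_simp; ring]
      nlinarith [mul_le_mul_of_nonneg_right hcase (sq_nonneg (c / N)), hx2, hll]
    · refine key α β hβ0 hangle' M (-1) (Or.inr rfl) ?_
      rw [htr, hB', hcosβ, hsinβ, hdetM, abs_of_pos hPs]
      rw [show c / N * (l1 + l2) + -1 * (P / N) * ((l2 - l1) * c / P) = 2 * l1 * (c / N) by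
        field_simp; ring]
      nlinarith [mul_le_mul_of_nonneg_right hcase (sq_nonneg (c / N)), hx2, hll]
  · have hcase2 : l2 ^ 2 ≤ l1 * l2 := by nlinarith [sq_nonneg l2, hll, hcase]
    rcases lt_or_gt_of_ne hP with hPs | hPs
    · refine key α β hβ0 hangle' M (-1) (Or.inr rfl) ?_
      rw [htr, hB', hcosβ, hsinβ, hdetM, abs_of_neg hPs]
      rw [show c / N * (l1 + l2) + -1 * (-P / N) * ((l2 - l1) * c / P) = 2 * l2 * (c / N) by
        field_simp; ring]
      nlinarith [mul_le_mul_of_nonneg_right hcase2 (sq_nonneg (c / N)), hx2, hll]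
    · refine key α β hβ0 hangle' M 1 (Or.inl rfl) ?_
      rw [htr, hB', hcosβ, hsinβ, hdetM, abs_of_pos hPs]
      rw [show c / N * (l1 + l2) + 1 * (P / N) * ((l2 - l1) * c / P) = 2 * l2 * (c / N) by
        field_simp; ring]
      nlinarith [mul_le_mul_of_nonneg_right hcase2 (sq_nonneg (c / N)), hx2, hll]
end
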